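/- Let p∈U_δ(p₀). If φ(q₀(p))≠0, then the function f(q) = φ(q)/(M(p)−w_p(q)) belongs to L¹(T³) but not to L²(T³). -/

import Mathlib

open MeasureTheory Real Filter Topology

noncomputable section

/-- The 3-torus `T³ = (ℝ/2πℤ)³` is modeled as `ℝ³ = Fin 3 → ℝ`; all functions involved
are required to be `2π`-periodic in each variable. -/
abbrev 𝕋 : Type := Fin 3 → ℝ

/-- The shift by `2π` times an integer vector (a period of the torus). -/
def shift (v : Fin 3 → ℤ) : 𝕋 := fun i => 2 * Real.pi * (v i)

/-- A fundamental domain `(-π, π]³` of the torus, used as the integration domain. -/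
def box : Set 𝕋 := Set.univ.pi fun _ => Set.Ioc (-Real.pi) Real.pi

lemma quad_arith {a b n2 qy w0 w1 : ℝ} (h1 : qy ≤ -a * n2) (h2 : -b * n2 ≤ qy)
    (h3 : -(a / 4 * n2) ≤ w1 - (w0 + qy / 2)) (h4 : w1 - (w0 + qy / 2) ≤ a / 4 * n2) :
    a / 4 * n2 ≤ w0 - w1 ∧ w0 - w1 ≤ (b / 2 + a / 4) * n2 := by
  constructor <;> linarith

lemma vec_two_eq (v : 𝕋) : (![v, v] : Fin 2 → 𝕋) = fun _ => v := by
  funext i; fin_cases i <;> rfl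

lemma taylor_bounds {f : 𝕋 → ℝ} {z : 𝕋} (hf : AnalyticAt ℝ f z)
    (hd : fderiv ℝ f z = 0)
    (hB : ∀ v : 𝕋, v ≠ 0 → iteratedFDeriv ℝ 2 f z ![v, v] < 0) :
    ∃ r c₁ c₂ : ℝ, 0 < r ∧ 0 < c₁ ∧ 0 < c₂ ∧
      ∀ y : 𝕋, ‖y‖ < r →
        c₁ * ‖y‖ ^ 2 ≤ f z - f (z + y) ∧ f z - f (z + y) ≤ c₂ * ‖y‖ ^ 2 := by
  obtain ⟨ps, hps⟩ := hf
  obtain ⟨rr, hball⟩ := hps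
  set Q : 𝕋 → ℝ := fun v => iteratedFDeriv ℝ 2 f z (fun _ => v) with hQdef
  have hQc : Continuous Q :=
    (iteratedFDeriv ℝ 2 f z).cont.comp (continuous_pi fun _ => continuous_id)
  have hQhom : ∀ (t : ℝ) (v : 𝕋), Q (t • v) = t ^ 2 * Q v := by
    intro t v
    have := (iteratedFDeriv ℝ 2 f z).map_smul_univ (fun _ => t) (fun _ => v)
    simpa [smul_eq_mul, Fin.prod_univ_two, sq] using this
  have hQneg : ∀ v : 𝕋, v ≠ 0 → Q v < 0 := by
    intro v hv
    have := hB v hv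
    rwa [vec_two_eq] at this
  have hKco : IsCompact (Metric.sphere (0 : 𝕋) 1) := isCompact_sphere 0 1
  have hKne : (Metric.sphere (0 : 𝕋) 1).Nonempty := by
    refine ⟨fun _ => 1, ?_⟩
    simp [Metric.mem_sphere, dist_eq_norm]
  obtain ⟨vmax, hvmaxK, hvmax⟩ := hKco.exists_isMaxOn hKne hQc.continuousOn
  obtain ⟨vmin, hvminK, hvmin⟩ := hKco.exists_isMinOn hKne hQc.continuousOn
  have hnorm_max : ‖vmax‖ = 1 := by simpa [dist_eq_norm] using hvmaxK
  have hnorm_min : ‖vmin‖ = 1 := by simpa [dist_eq_norm] using hvminK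
  set a : ℝ := -Q vmax with ha
  set b : ℝ := -Q vmin with hb
  have ha0 : 0 < a := by
    have : Q vmax < 0 := hQneg vmax (by intro h; rw [h] at hnorm_max; simp at hnorm_max)
    linarith
  have hab : a ≤ b := by
    have h2 : Q vmin ≤ Q vmax := hvmin hvmaxK
    simp only [ha, hb]; linarith
  have hb0 : 0 < b := lt_of_lt_of_le ha0 hab
  have hQbound : ∀ y : 𝕋, -b * ‖y‖ ^ 2 ≤ Q y ∧ Q y ≤ -a * ‖y‖ ^ 2 := by
    intro y
    rcases eq_or_ne y 0 with rfl | hy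
    · have : Q 0 = 0 := by
        have := hQhom 0 0; simpa using this
      simp [this]
    · have hny : 0 < ‖y‖ := norm_pos_iff.2 hy
      set u : 𝕋 := ‖y‖⁻¹ • y with hu
      have huK : u ∈ Metric.sphere (0 : 𝕋) 1 := by
        simp [hu, Metric.mem_sphere, dist_eq_norm, norm_smul, abs_of_pos (inv_pos.2 hny),
          inv_mul_cancel₀ hny.ne']
      have hyu : y = ‖y‖ • u := by
        rw [hu, smul_smul, mul_inv_cancel₀ hny.ne', one_smul]
      have h1 : Q y = ‖y‖ ^ 2 * Q u := by nth_rewrite 1 [hyu]; rw [hQhom]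
      constructor
      · rw [h1]
        have : Q vmin ≤ Q u := hvmin huK
        nlinarith [sq_nonneg ‖y‖]
      · rw [h1]
        have : Q u ≤ Q vmax := hvmax huK
        nlinarith [sq_nonneg ‖y‖]
  have hp0 : ∀ y : 𝕋, ps 0 (fun _ => y) = f z := by
    intro y
    have h := hball.factorial_smul y 0
    simpa [iteratedFDeriv_zero_apply] using h
  have hp1 : ∀ y : 𝕋, ps 1 (fun _ => y) = 0 := by
    intro y
    have h := hball.factorial_smul y 1
    simpa [iteratedFDeriv_one_apply, hd] using h
  have hp2 : ∀ y : 𝕋, ps 2 (fun _ => y) = Q y / 2 := by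
    intro y
    have h := hball.factorial_smul y 2
    have h2 : iteratedFDeriv ℝ 2 f z (fun _ => y) = Q y := rfl
    rw [h2] at h
    have h' : (2 : ℝ) * ps 2 (fun _ => y) = Q y := by
      simpa [Nat.factorial, nsmul_eq_mul] using h
    linarith
  have hpsum : ∀ y : 𝕋, ps.partialSum 3 y = f z + Q y / 2 := by
    intro y
    simp [FormalMultilinearSeries.partialSum, Finset.sum_range_succ, hp0 y, hp1 y, hp2 y]
  have hBigO := hball.hasFPowerSeriesAt.isBigO_sub_partialSum_pow 3
  rw [Asymptotics.isBigO_iff] at hBigO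
  obtain ⟨C, hC⟩ := hBigO
  rw [Metric.eventually_nhds_iff] at hC
  obtain ⟨ε, hε, hCb⟩ := hC
  set C1 : ℝ := max C 1 with hC1
  have hC10 : 0 < C1 := lt_of_lt_of_le one_pos (le_max_right _ _)
  set r : ℝ := min ε (a / (4 * C1)) with hrdef
  have hr0 : 0 < r := lt_min hε (by positivity)
  refine ⟨r, a / 4, b / 2 + a / 4, hr0, by positivity, by positivity, ?_⟩
  intro y hy
  have hyε : dist y 0 < ε := by
    rw [dist_zero_right]; exact lt_of_lt_of_le hy (min_le_left _ _)
  have hRy : ‖f (z + y) - ps.partialSum 3 y‖ ≤ C * ‖‖y‖ ^ 3‖ := hCb hyε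
  have hRy2 : |f (z + y) - (f z + Q y / 2)| ≤ C1 * ‖y‖ ^ 3 := by
    rw [hpsum y] at hRy
    calc |f (z + y) - (f z + Q y / 2)| ≤ C * ‖‖y‖ ^ 3‖ := hRy
      _ ≤ C1 * ‖y‖ ^ 3 := by
          rw [Real.norm_eq_abs, abs_of_nonneg (by positivity : (0:ℝ) ≤ ‖y‖ ^ 3)]
          exact mul_le_mul_of_nonneg_right (le_max_left _ _) (by positivity)
  have hy3 : C1 * ‖y‖ ^ 3 ≤ a / 4 * ‖y‖ ^ 2 := by
    have h1 : ‖y‖ ≤ a / (4 * C1) := le_of_lt (lt_of_lt_of_le hy (min_le_right _ _))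
    have h2 : ‖y‖ ^ 3 = ‖y‖ * ‖y‖ ^ 2 := by ring
    rw [h2, ← mul_assoc]
    have : C1 * ‖y‖ ≤ a / 4 := by
      calc C1 * ‖y‖ ≤ C1 * (a / (4 * C1)) :=
            mul_le_mul_of_nonneg_left (le_of_lt (lt_of_lt_of_le hy (min_le_right _ _))) hC10.le
        _ = a / 4 := by field_simp
    exact mul_le_mul_of_nonneg_right this (sq_nonneg _)
  have hQy := hQbound y
  have habs := abs_le.1 (hRy2.trans hy3)
  exact quad_arith hQy.2 hQy.1 habs.1 habs.2

lemma oneD (c r : ℝ) (hr : 0 < r) :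
    IntegrableOn (fun t : ℝ => |t - c| ^ (-(2/3) : ℝ)) (Set.Ioc (c - r) (c + r)) volume := by
  have hsplit : Set.Ioc (c - r) (c + r) = Set.Ioc (c - r) c ∪ Set.Ioc c (c + r) := by
    rw [Set.Ioc_union_Ioc_eq_Ioc (by linarith) (by linarith)]
  rw [hsplit]
  have hrpow : IntervalIntegrable (fun x : ℝ => x ^ (-(2/3) : ℝ)) volume 0 r :=
    intervalIntegral.intervalIntegrable_rpow' (by norm_num)
  apply IntegrableOn.union
  · have h1 : IntervalIntegrable (fun x : ℝ => (c - x) ^ (-(2/3) : ℝ)) volume (c - 0) (c - r) :=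
      hrpow.comp_sub_left c
    have h2 : IntegrableOn (fun x : ℝ => (c - x) ^ (-(2/3) : ℝ)) (Set.Ioc (c - r) c) volume := by
      have := h1.symm
      rw [intervalIntegrable_iff_integrableOn_Ioc_of_le (by linarith)] at this
      simpa using this
    apply h2.congr_fun _ measurableSet_Ioc
    intro t ht
    show (c - t) ^ (-(2/3) : ℝ) = |t - c| ^ (-(2/3) : ℝ)
    rw [abs_sub_comm, abs_of_nonneg (by linarith [ht.2] : (0:ℝ) ≤ c - t)]
  · have h1 : IntervalIntegrable (fun x : ℝ => (x - c) ^ (-(2/3) : ℝ)) volume (0 + c) (r + c) :=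
      hrpow.comp_sub_right c
    have h2 : IntegrableOn (fun x : ℝ => (x - c) ^ (-(2/3) : ℝ)) (Set.Ioc c (c + r)) volume := by
      rw [intervalIntegrable_iff_integrableOn_Ioc_of_le (by linarith)] at h1
      simpa [add_comm] using h1
    apply h2.congr_fun _ measurableSet_Ioc
    intro t ht
    show (t - c) ^ (-(2/3) : ℝ) = |t - c| ^ (-(2/3) : ℝ)
    rw [abs_of_nonneg (by linarith [ht.1] : (0:ℝ) ≤ t - c)]

lemma prod_bound (u : 𝕋) (hu : ∀ i, u i ≠ 0) :
    (‖u‖ ^ 2)⁻¹ ≤ ∏ i : Fin 3, |u i| ^ (-(2/3) : ℝ) := by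
  have hn : 0 < ‖u‖ := by
    rw [norm_pos_iff]
    intro h
    exact hu 0 (by rw [h]; rfl)
  have habs : ∀ i : Fin 3, 0 < |u i| := fun i => abs_pos.2 (hu i)
  have hle : ∀ i : Fin 3, |u i| ≤ ‖u‖ := fun i => by
    simpa [Real.norm_eq_abs] using norm_le_pi_norm u i
  have hprodpos : 0 < ∏ i : Fin 3, |u i| ^ ((2/3) : ℝ) :=
    Finset.prod_pos fun i _ => rpow_pos_of_pos (habs i) _
  have h1 : (∏ i : Fin 3, |u i| ^ ((2/3) : ℝ)) ≤ ‖u‖ ^ 2 := by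
    calc (∏ i : Fin 3, |u i| ^ ((2/3) : ℝ)) ≤ ∏ _i : Fin 3, ‖u‖ ^ ((2/3) : ℝ) :=
          Finset.prod_le_prod (fun i _ => rpow_nonneg (abs_nonneg _) _)
            (fun i _ => rpow_le_rpow (abs_nonneg _) (hle i) (by norm_num))
      _ = (‖u‖ ^ ((2/3) : ℝ)) ^ (3 : ℕ) := by
          rw [Finset.prod_const]; norm_num
      _ = ‖u‖ ^ 2 := by
          rw [← Real.rpow_natCast (‖u‖ ^ ((2/3) : ℝ)) 3, ← Real.rpow_mul hn.le]
          norm_num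
  have h2 : (∏ i : Fin 3, |u i| ^ (-(2/3) : ℝ)) = (∏ i : Fin 3, |u i| ^ ((2/3) : ℝ))⁻¹ := by
    rw [← Finset.prod_inv_distrib]
    refine Finset.prod_congr rfl fun i _ => ?_
    rw [← Real.rpow_neg (abs_nonneg _)]
  rw [h2]
  exact inv_anti₀ hprodpos h1

lemma shift_zero : shift 0 = 0 := by funext i; simp [shift]

lemma box_measurable : MeasurableSet box :=
  MeasurableSet.univ_pi fun _ => measurableSet_Ioc

lemma box_volume_lt_top : volume box < ⊤ := by
  rw [box, volume_pi_pi]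
  simp [Real.volume_Ioc]

lemma box_subset_Icc : box ⊆ Set.Icc (fun _ => -Real.pi) (fun _ => Real.pi) := by
  intro q hq
  constructor <;> intro i
  · exact (hq i (Set.mem_univ i)).1.le
  · exact (hq i (Set.mem_univ i)).2

lemma exists_rep (x : ℝ) :
    ∃ k : ℤ, -Real.pi ≤ x + 2 * Real.pi * k ∧ x + 2 * Real.pi * k < Real.pi := by
  refine ⟨-⌊(x + Real.pi) / (2 * Real.pi)⌋, ?_, ?_⟩
  · have h := Int.floor_le ((x + Real.pi) / (2 * Real.pi))
    have h2 : (⌊(x + Real.pi) / (2 * Real.pi)⌋ : ℝ) * (2 * Real.pi) ≤ x + Real.pi := by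
      rw [← le_div_iff₀ (by positivity)]
      exact h
    push_cast
    nlinarith [Real.pi_pos]
  · have h := Int.lt_floor_add_one ((x + Real.pi) / (2 * Real.pi))
    have h2 : x + Real.pi < ((⌊(x + Real.pi) / (2 * Real.pi)⌋ : ℝ) + 1) * (2 * Real.pi) := by
      rw [← div_lt_iff₀ (by positivity)]
      exact h
    push_cast
    nlinarith [Real.pi_pos]


set_option maxHeartbeats 2000000 in
/-- Let `p ∈ U_δ(p₀)`.  If `φ(q0 p) ≠ 0`, then
`f(q) = φ(q)/(M(p) − w_p(q))` belongs to `L¹(T³)` but not to `L²(T³)`. -/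
theorem statement17
    (φ : 𝕋 → ℝ)
    (hφa : AnalyticOnNhd ℝ φ Set.univ)
    (hφper : ∀ (x : 𝕋) (v : Fin 3 → ℤ), φ (x + shift v) = φ x)
    (hφnt : φ ≠ 0)
    (w : 𝕋 → 𝕋 → ℝ)
    (hwa : AnalyticOnNhd ℝ (fun x : 𝕋 × 𝕋 => w x.1 x.2) Set.univ)
    (hwper : ∀ (p q : 𝕋) (v u : Fin 3 → ℤ), w (p + shift v) (q + shift u) = w p q)
    (p₀ q₀ : 𝕋)
    (hmax : ∀ p q : 𝕋, w p q ≤ w p₀ q₀)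
    (huniq : ∀ p q : 𝕋, w p q = w p₀ q₀ →
      ∃ v u : Fin 3 → ℤ, p = p₀ + shift v ∧ q = q₀ + shift u)
    (hgrad : fderiv ℝ (fun x : 𝕋 × 𝕋 => w x.1 x.2) (p₀, q₀) = 0)
    (hhess : ∀ v : 𝕋 × 𝕋, v ≠ 0 →
      iteratedFDeriv ℝ 2 (fun x : 𝕋 × 𝕋 => w x.1 x.2) (p₀, q₀) ![v, v] < 0)
    (δ : ℝ) (hδ : 0 < δ) (q0 : 𝕋 → 𝕋)
    (hq0a : AnalyticOnNhd ℝ q0 (Metric.ball p₀ δ))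
    (hq0max : ∀ p ∈ Metric.ball p₀ δ, ∀ q : 𝕋, w p q ≤ w p (q0 p))
    (hq0uniq : ∀ p ∈ Metric.ball p₀ δ, ∀ q : 𝕋, w p q = w p (q0 p) →
      ∃ v : Fin 3 → ℤ, q = q0 p + shift v)
    (hq0grad : ∀ p ∈ Metric.ball p₀ δ, fderiv ℝ (w p) (q0 p) = 0)
    (hq0hess : ∀ p ∈ Metric.ball p₀ δ, ∀ v : 𝕋, v ≠ 0 →
      iteratedFDeriv ℝ 2 (w p) (q0 p) ![v, v] < 0)
    (p : 𝕋) (hp : p ∈ Metric.ball p₀ δ) (hφ0 : φ (q0 p) ≠ 0) :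
    IntegrableOn (fun q => φ q / (w p (q0 p) - w p q)) box volume ∧
    ¬ MemLp (fun q => φ q / (w p (q0 p) - w p q)) 2 (volume.restrict box) := by
  classical
  have Hmax := hq0max p hp
  have Huniq := hq0uniq p hp
  have Hgrad := hq0grad p hp
  have Hhess := hq0hess p hp
  set z : 𝕋 := q0 p with hz
  set M : ℝ := w p z with hM
  -- continuity
  have hwcont : Continuous fun x : 𝕋 × 𝕋 => w x.1 x.2 :=
    continuousOn_univ.1 hwa.continuousOn
  have hwp_cont : Continuous fun q => w p q :=
    hwcont.comp (continuous_const.prodMk continuous_id)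
  have hφcont : Continuous φ :=
    continuousOn_univ.1 hφa.continuousOn
  have hfa : AnalyticAt ℝ (w p) z :=
    (hwa (p, z) (Set.mem_univ _)).comp (analyticAt_const.prod analyticAt_id)
  obtain ⟨r₀, c₁, c₂, hr₀, hc₁, hc₂, hTay⟩ := taylor_bounds hfa Hgrad Hhess
  set r : ℝ := min r₀ 1 with hrdef
  have hr0 : 0 < r := lt_min hr₀ one_pos
  have hr1 : r ≤ 1 := min_le_right _ _
  have hrr₀ : r ≤ r₀ := min_le_left _ _
  have hpi1 : (1 : ℝ) < π := by linarith [Real.pi_gt_three]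
  -- periodicity of w p in q
  have hper : ∀ (q : 𝕋) (v : Fin 3 → ℤ), w p (q + shift v) = w p q := by
    intro q v
    have h := hwper p q 0 v
    rwa [shift_zero, add_zero] at h
  have hg0 : ∀ q, 0 ≤ M - w p q := fun q => sub_nonneg.2 (Hmax q)
  -- quadratic bounds near translates of z
  have hquad : ∀ (v : Fin 3 → ℤ) (q : 𝕋), ‖q - (z + shift v)‖ < r →
      c₁ * ‖q - (z + shift v)‖ ^ 2 ≤ M - w p q ∧
        M - w p q ≤ c₂ * ‖q - (z + shift v)‖ ^ 2 := by
    intro v q hq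
    have hqe : q = z + (q - (z + shift v)) + shift v := by abel
    have hwq : w p q = w p (z + (q - (z + shift v))) := by
      conv_lhs => rw [hqe]
      exact hper _ v
    rw [hM, hwq]
    exact hTay _ (lt_of_lt_of_le hq hrr₀)
  -- bound for φ on the closed box
  obtain ⟨Cφ, hCφ0, hCφ⟩ :
      ∃ C : ℝ, 0 < C ∧ ∀ q ∈ Set.Icc (fun _ : Fin 3 => -π) (fun _ => π), |φ q| ≤ C := by
    obtain ⟨q₁, hq₁m, hq₁⟩ :=
      (isCompact_Icc (a := fun _ : Fin 3 => -π) (b := fun _ => π)).exists_isMaxOn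
        ⟨fun _ => 0, Set.mem_Icc.2 ⟨fun i => by show (-π : ℝ) ≤ 0; linarith [Real.pi_pos],
          fun i => by show (0:ℝ) ≤ π; linarith [Real.pi_pos]⟩⟩
        (continuous_abs.comp hφcont).continuousOn
    refine ⟨|φ q₁| + 1, by positivity, fun q hq => ?_⟩
    have h' : |φ q| ≤ |φ q₁| := hq₁ hq
    linarith
  -- lower bound away from the singular set
  set K' : Set 𝕋 := (Set.Icc (fun _ : Fin 3 => -π) (fun _ => π)) ∩
      ⋂ v : Fin 3 → ℤ, {q : 𝕋 | r ≤ ‖q - (z + shift v)‖} with hK'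
  have hK'comp : IsCompact K' :=
    isCompact_Icc.inter_right (isClosed_iInter fun v =>
      isClosed_le continuous_const ((continuous_id.sub continuous_const).norm))
  obtain ⟨m, hm0, hmK⟩ : ∃ m : ℝ, 0 < m ∧ ∀ q ∈ K', m ≤ M - w p q := by
    rcases K'.eq_empty_or_nonempty with he | hne
    · exact ⟨1, one_pos, fun q hq => by rw [he] at hq; exact absurd hq (Set.notMem_empty q)⟩
    · obtain ⟨qm, hqmK, hqm⟩ :=
        hK'comp.exists_isMinOn hne (continuous_const.sub hwp_cont).continuousOn
      refine ⟨M - w p qm, ?_, fun q hq => hqm hq⟩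
      rcases lt_or_eq_of_le (hg0 qm) with h | h
      · exact h
      · exfalso
        obtain ⟨v, hv⟩ := Huniq qm (by linarith)
        have h2 := hqmK.2
        rw [Set.mem_iInter] at h2
        have h3 := h2 v
        rw [hv] at h3
        simp only [Set.mem_setOf_eq, sub_self, norm_zero] at h3
        linarith
  -- finite set of relevant lattice vectors
  set N : ℤ := ⌈(π + ‖z‖ + r) / (2 * π)⌉ with hN
  set V : Set (Fin 3 → ℤ) := Set.univ.pi (fun _ => Set.Icc (-N) N) with hV
  have hVfin : V.Finite := Set.Finite.pi (fun _ => Set.finite_Icc _ _)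
  have hmemV : ∀ (v : Fin 3 → ℤ) (q : 𝕋), q ∈ box → ‖q - (z + shift v)‖ < r → v ∈ V := by
    intro v q hqbox hqv
    rw [hV, Set.mem_univ_pi]
    intro i
    rw [Set.mem_Icc]
    have hpi := Real.pi_pos
    have h1 : |q i| ≤ π := by
      have := hqbox i (Set.mem_univ i)
      rw [abs_le]; exact ⟨this.1.le, this.2⟩
    have h2 : |z i| ≤ ‖z‖ := by simpa [Real.norm_eq_abs] using norm_le_pi_norm z i
    have h3 : |q i - (z i + 2 * π * v i)| < r := by
      have hn := norm_le_pi_norm (q - (z + shift v)) i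
      rw [Real.norm_eq_abs] at hn
      have he : (q - (z + shift v)) i = q i - (z i + 2 * π * v i) := by
        simp [shift, Pi.sub_apply, Pi.add_apply]
      rw [he] at hn
      exact lt_of_le_of_lt hn hqv
    have h1' := abs_le.1 h1
    have h2' := abs_le.1 h2
    have h3' := abs_le.1 h3.le
    have hvu : (v i : ℝ) ≤ (π + ‖z‖ + r) / (2 * π) := by
      rw [le_div_iff₀ (by positivity)]
      linarith [h1'.1, h1'.2, h2'.1, h2'.2, h3'.1, h3'.2]
    have hvl : -((π + ‖z‖ + r) / (2 * π)) ≤ (v i : ℝ) := by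
      rw [neg_le, le_div_iff₀ (by positivity)]
      linarith [h1'.1, h1'.2, h2'.1, h2'.2, h3'.1, h3'.2]
    have hNle : (π + ‖z‖ + r) / (2 * π) ≤ (N : ℝ) := Int.le_ceil _
    constructor
    · have : -(N : ℝ) ≤ (v i : ℝ) := by linarith
      exact_mod_cast this
    · have : (v i : ℝ) ≤ (N : ℝ) := by linarith
      exact_mod_cast this
  -- measurability of the integrand
  have hmeas : AEStronglyMeasurable (fun q => φ q / (M - w p q)) (volume.restrict box) :=
    (hφcont.measurable.div ((continuous_const.sub hwp_cont).measurable)).aestronglyMeasurable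
  -- the dominating function
  set G : 𝕋 → ℝ := fun q => Cφ / m + ∑ v ∈ hVfin.toFinset, (Cφ / c₁) *
      ∏ i : Fin 3, Set.indicator (Set.Ioc ((z + shift v) i - r) ((z + shift v) i + r))
        (fun t => |t - (z + shift v) i| ^ (-(2/3) : ℝ)) (q i) with hG
  have hGint : Integrable G (volume.restrict box) := by
    apply Integrable.add
    · exact (integrableOn_const box_volume_lt_top.ne)
    · apply Integrable.restrict
      apply integrable_finset_sum
      intro v _
      apply Integrable.const_mul
      exact Integrable.fintype_prod
        (fun i => (integrable_indicator_iff measurableSet_Ioc).2 (oneD _ _ hr0))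
  -- almost everywhere, don't sit on a hyperplane
  have haevol : ∀ᵐ q : 𝕋 ∂volume, ∀ (v : Fin 3 → ℤ), ∀ i : Fin 3, q i ≠ (z + shift v) i := by
    rw [ae_all_iff]
    intro v
    rw [ae_all_iff]
    intro i
    have h0 : volume {q : 𝕋 | q i = (z + shift v) i} = 0 := by
      rw [volume_pi]
      exact MeasureTheory.Measure.pi_hyperplane (fun _ => (volume : Measure ℝ)) i _
    rw [ae_iff]
    convert h0 using 2
    simp
  have hae' : ∀ᵐ q ∂(volume.restrict box), ∀ (v : Fin 3 → ℤ), ∀ i : Fin 3,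
      q i ≠ (z + shift v) i := haevol.filter_mono (ae_mono Measure.restrict_le_self)
  have hsum_nonneg : ∀ q : 𝕋, 0 ≤ ∑ v ∈ hVfin.toFinset, (Cφ / c₁) *
      ∏ i : Fin 3, Set.indicator (Set.Ioc ((z + shift v) i - r) ((z + shift v) i + r))
        (fun t => |t - (z + shift v) i| ^ (-(2/3) : ℝ)) (q i) := by
    intro q
    apply Finset.sum_nonneg
    intro v _
    apply mul_nonneg (by positivity)
    apply Finset.prod_nonneg
    intro i _
    exact Set.indicator_nonneg (fun t _ => rpow_nonneg (abs_nonneg _) _) _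
  have hbound : ∀ᵐ q ∂(volume.restrict box), ‖φ q / (M - w p q)‖ ≤ G q := by
    filter_upwards [ae_restrict_mem box_measurable, hae'] with q hqbox hqne
    by_cases hcase : ∀ v : Fin 3 → ℤ, r ≤ ‖q - (z + shift v)‖
    · have hqK' : q ∈ K' := ⟨box_subset_Icc hqbox, Set.mem_iInter.2 fun v => hcase v⟩
      have h1 : m ≤ M - w p q := hmK q hqK'
      rw [Real.norm_eq_abs, abs_div, abs_of_nonneg (hg0 q)]
      have h2 : |φ q| / (M - w p q) ≤ Cφ / m :=
        div_le_div₀ hCφ0.le (hCφ q (box_subset_Icc hqbox)) hm0 h1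
      rw [hG]
      have := hsum_nonneg q
      dsimp only
      linarith
    · push_neg at hcase
      obtain ⟨v, hv⟩ := hcase
      have hvV : v ∈ hVfin.toFinset := by
        rw [Set.Finite.mem_toFinset]; exact hmemV v q hqbox hv
      set u : 𝕋 := q - (z + shift v) with hu
      have hui : ∀ i, u i ≠ 0 := by
        intro i
        rw [hu]
        exact sub_ne_zero.2 (hqne v i)
      have hu0 : 0 < ‖u‖ := by
        rw [norm_pos_iff]
        intro h0
        exact hui 0 (by rw [h0]; rfl)
      have hquadv := (hquad v q hv).1
      have hφb : |φ q| ≤ Cφ := hCφ q (box_subset_Icc hqbox)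
      have key : ‖φ q / (M - w p q)‖ ≤ Cφ / c₁ * (‖u‖ ^ 2)⁻¹ := by
        rw [Real.norm_eq_abs, abs_div, abs_of_nonneg (hg0 q)]
        have hden : 0 < c₁ * ‖u‖ ^ 2 := by positivity
        calc |φ q| / (M - w p q) ≤ Cφ / (c₁ * ‖u‖ ^ 2) :=
              div_le_div₀ hCφ0.le hφb hden hquadv
          _ = Cφ / c₁ * (‖u‖ ^ 2)⁻¹ := by
              rw [div_mul_eq_div_div_swap, div_div]
              ring_nf
      have key2 : Cφ / c₁ * (‖u‖ ^ 2)⁻¹ ≤ Cφ / c₁ * ∏ i : Fin 3, |u i| ^ (-(2/3) : ℝ) :=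
        mul_le_mul_of_nonneg_left (prod_bound u hui) (by positivity)
      have hind : ∏ i : Fin 3, Set.indicator (Set.Ioc ((z + shift v) i - r) ((z + shift v) i + r))
          (fun t => |t - (z + shift v) i| ^ (-(2/3) : ℝ)) (q i)
          = ∏ i : Fin 3, |u i| ^ (-(2/3) : ℝ) := by
        refine Finset.prod_congr rfl fun i _ => ?_
        have hmem : q i ∈ Set.Ioc ((z + shift v) i - r) ((z + shift v) i + r) := by
          have hn := norm_le_pi_norm u i
          rw [Real.norm_eq_abs] at hn
          have : |u i| < r := lt_of_le_of_lt hn hv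
          have := abs_lt.1 this
          have hue : u i = q i - (z + shift v) i := rfl
          rw [hue] at this
          constructor <;> [linarith [this.1]; linarith [this.2]]
        rw [Set.indicator_of_mem hmem]
        rfl
      rw [hG]
      dsimp only
      have hterm : Cφ / c₁ * ∏ i : Fin 3, Set.indicator
          (Set.Ioc ((z + shift v) i - r) ((z + shift v) i + r))
          (fun t => |t - (z + shift v) i| ^ (-(2/3) : ℝ)) (q i)
          ≤ ∑ v' ∈ hVfin.toFinset, (Cφ / c₁) *
          ∏ i : Fin 3, Set.indicator (Set.Ioc ((z + shift v') i - r) ((z + shift v') i + r))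
            (fun t => |t - (z + shift v') i| ^ (-(2/3) : ℝ)) (q i) := by
        apply Finset.single_le_sum (f := fun v' => (Cφ / c₁) * ∏ i : Fin 3,
          Set.indicator (Set.Ioc ((z + shift v') i - r) ((z + shift v') i + r))
            (fun t => |t - (z + shift v') i| ^ (-(2/3) : ℝ)) (q i)) _ hvV
        intro v' _
        apply mul_nonneg (by positivity)
        exact Finset.prod_nonneg fun i _ =>
          Set.indicator_nonneg (fun t _ => rpow_nonneg (abs_nonneg _) _) _
      rw [hind] at hterm
      have hCm : 0 ≤ Cφ / m := by positivity
      linarith [key.trans key2]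
  have int1 : IntegrableOn (fun q => φ q / (M - w p q)) box volume :=
    Integrable.mono' hGint hmeas hbound
  refine ⟨int1, ?_⟩
  -- Part 2 : not in L²
  intro hL2
  have hφz : φ z ≠ 0 := hφ0
  obtain ⟨ε₁, hε₁, hφnear⟩ : ∃ ε₁ > 0, ∀ x : 𝕋, ‖x - z‖ < ε₁ → |φ z| / 2 ≤ |φ x| := by
    have hc := hφcont.continuousAt (x := z)
    rw [Metric.continuousAt_iff] at hc
    obtain ⟨ε₁, hε₁, h⟩ := hc (|φ z| / 2) (by positivity)
    refine ⟨ε₁, hε₁, fun x hx => ?_⟩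
    have h2 := h (show dist x z < ε₁ by rwa [dist_eq_norm])
    rw [Real.dist_eq] at h2
    have h3 := abs_sub_abs_le_abs_sub (φ z) (φ x)
    rw [abs_sub_comm (φ z) (φ x)] at h3
    linarith
  choose k hk1 hk2 using fun i => exists_rep (z i)
  set s₀ : 𝕋 := z + shift k with hs₀def
  have hs₀ : ∀ i, -π ≤ s₀ i ∧ s₀ i < π := by
    intro i
    constructor
    · simpa [hs₀def, shift] using hk1 i
    · simpa [hs₀def, shift] using hk2 i
  have hsq := hL2.integrable_sq
  set I : ENNReal := ∫⁻ q in box, ENNReal.ofReal ((φ q / (M - w p q)) ^ 2) with hI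
  have hIlt : I < ⊤ := by
    have h1 : ∫⁻ q in box, ‖(φ q / (M - w p q)) ^ 2‖ₑ < ⊤ := hsq.2
    refine lt_of_le_of_lt ?_ h1
    apply lintegral_mono
    intro q
    show ENNReal.ofReal ((φ q / (M - w p q)) ^ 2) ≤ ‖(φ q / (M - w p q)) ^ 2‖ₑ
    rw [Real.enorm_eq_ofReal_abs]
    exact ENNReal.ofReal_le_ofReal (le_abs_self _)
  set A : ℝ := |φ z| ^ 2 / 4 / c₂ ^ 2 with hA
  have hA0 : 0 < A := by
    have := abs_pos.2 hφz
    positivity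
  set t : ℝ := min r ε₁ with htdef
  have ht0 : 0 < t := lt_min hr0 hε₁
  have htr : t ≤ r := min_le_left _ _
  have htε : t ≤ ε₁ := min_le_right _ _
  have hkey : ∀ u : ℝ, 0 < u → u < t → ENNReal.ofReal (A / u) ≤ I := by
    intro u hu0 hut
    have hur : u < r := lt_of_lt_of_le hut htr
    have hu1 : u < 1 := lt_of_lt_of_le hur hr1
    set cube : Set 𝕋 := Set.univ.pi (fun i =>
      if s₀ i < 0 then Set.Ioo (s₀ i) (s₀ i + u) else Set.Ioo (s₀ i - u) (s₀ i)) with hcube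
    have hcubem : MeasurableSet cube :=
      MeasurableSet.univ_pi fun i => by split <;> exact measurableSet_Ioo
    have hcubevol : volume cube = ENNReal.ofReal u ^ 3 := by
      rw [hcube, volume_pi_pi]
      have heach : ∀ i : Fin 3, volume (if s₀ i < 0 then Set.Ioo (s₀ i) (s₀ i + u)
          else Set.Ioo (s₀ i - u) (s₀ i)) = ENNReal.ofReal u := by
        intro i
        split <;> rw [Real.volume_Ioo] <;> ring_nf
      rw [Finset.prod_congr rfl fun i _ => heach i, Finset.prod_const]
      simp
    have hcubesub : cube ⊆ box := by
      intro q hq i _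
      have hqi : q i ∈ (if s₀ i < 0 then Set.Ioo (s₀ i) (s₀ i + u)
          else Set.Ioo (s₀ i - u) (s₀ i)) := hq i (Set.mem_univ i)
      have hsi := hs₀ i
      by_cases hc : s₀ i < 0
      · rw [if_pos hc] at hqi
        exact ⟨lt_of_le_of_lt hsi.1 hqi.1, by linarith [hqi.2, hpi1, hu1]⟩
      · rw [if_neg hc] at hqi
        push_neg at hc
        exact ⟨by linarith [hqi.1, hpi1, hu1], le_of_lt (lt_of_lt_of_le hqi.2 hsi.2.le)⟩
    have hcubeball : ∀ q ∈ cube, (∀ i, q i ≠ s₀ i) ∧ ‖q - s₀‖ < u := by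
      intro q hq
      have hco : ∀ i, |q i - s₀ i| < u ∧ q i ≠ s₀ i := by
        intro i
        have hqi : q i ∈ (if s₀ i < 0 then Set.Ioo (s₀ i) (s₀ i + u)
            else Set.Ioo (s₀ i - u) (s₀ i)) := hq i (Set.mem_univ i)
        by_cases hc : s₀ i < 0
        · rw [if_pos hc] at hqi
          exact ⟨abs_lt.2 ⟨by linarith [hqi.1], by linarith [hqi.2]⟩, by intro h; rw [h] at hqi; linarith [hqi.1]⟩
        · rw [if_neg hc] at hqi
          exact ⟨abs_lt.2 ⟨by linarith [hqi.1], by linarith [hqi.2]⟩, by intro h; rw [h] at hqi; linarith [hqi.2]⟩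
      refine ⟨fun i => (hco i).2, ?_⟩
      refine (pi_norm_lt_iff hu0).2 fun i => ?_
      show ‖q i - s₀ i‖ < u
      rw [Real.norm_eq_abs]
      exact (hco i).1
    have hlow : ∀ q ∈ cube,
        ENNReal.ofReal (A / u ^ 4) ≤ ENNReal.ofReal ((φ q / (M - w p q)) ^ 2) := by
      intro q hq
      obtain ⟨hne, hball⟩ := hcubeball q hq
      have hnorm0 : 0 < ‖q - s₀‖ := by
        rw [norm_pos_iff]
        intro h0
        exact hne 0 (sub_eq_zero.1 (congrFun h0 0))
      have hq2 := hquad k q (show ‖q - (z + shift k)‖ < r from lt_trans hball hur)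
      have hDpos : 0 < M - w p q :=
        lt_of_lt_of_le (mul_pos hc₁ (pow_pos hnorm0 2)) hq2.1
      have hsqle : ‖q - s₀‖ ^ 2 ≤ u ^ 2 := by nlinarith [hball, hnorm0.le]
      have hDle : M - w p q ≤ c₂ * u ^ 2 :=
        le_trans hq2.2 (by nlinarith [hsqle, hc₂.le])
      have hφq : |φ z| / 2 ≤ |φ q| := by
        have hqeq : q - shift k + shift k = q := by abel
        have hφeq : φ q = φ (q - shift k) := by
          conv_lhs => rw [← hqeq]
          exact hφper _ k
        rw [hφeq]
        apply hφnear
        have hdiff : q - shift k - z = q - s₀ := by rw [hs₀def]; abel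
        rw [hdiff]
        exact lt_of_lt_of_le hball (le_trans hut.le htε)
      apply ENNReal.ofReal_le_ofReal
      have hAu : A / u ^ 4 = |φ z| ^ 2 / 4 / (c₂ ^ 2 * u ^ 4) := by
        rw [hA, div_div]
      rw [hAu, div_pow]
      apply div_le_div₀ (sq_nonneg (φ q))
      · nlinarith [sq_abs (φ q), hφq, abs_nonneg (φ z)]
      · positivity
      · calc (M - w p q) ^ 2 ≤ (c₂ * u ^ 2) ^ 2 := by nlinarith [hDpos.le, hDle]
          _ = c₂ ^ 2 * u ^ 4 := by ring
    calc ENNReal.ofReal (A / u)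
        = ENNReal.ofReal (A / u ^ 4) * volume cube := by
          rw [hcubevol, ← ENNReal.ofReal_pow hu0.le, ← ENNReal.ofReal_mul (by positivity)]
          congr 1
          field_simp
      _ = ∫⁻ _ in cube, ENNReal.ofReal (A / u ^ 4) := (setLIntegral_const _ _).symm
      _ ≤ ∫⁻ q in cube, ENNReal.ofReal ((φ q / (M - w p q)) ^ 2) := by
          apply setLIntegral_mono
            (((hφcont.measurable.div ((continuous_const.sub hwp_cont).measurable)).pow_const
              2).ennreal_ofReal) hlow
      _ ≤ ∫⁻ q in box, ENNReal.ofReal ((φ q / (M - w p q)) ^ 2) := lintegral_mono_set hcubesub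
      _ = I := rfl
  -- conclude the contradiction
  set u₀ : ℝ := min (t / 2) (A / (I.toReal + 1)) with hu₀def
  have hItR : (0:ℝ) ≤ I.toReal := ENNReal.toReal_nonneg
  have hu₀0 : 0 < u₀ := lt_min (by linarith) (by positivity)
  have hu₀t : u₀ < t := lt_of_le_of_lt (min_le_left _ _) (by linarith)
  have h1 := hkey u₀ hu₀0 hu₀t
  have h2 : I.toReal + 1 ≤ A / u₀ := by
    rw [le_div_iff₀ hu₀0]
    calc (I.toReal + 1) * u₀ ≤ (I.toReal + 1) * (A / (I.toReal + 1)) :=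
          mul_le_mul_of_nonneg_left (min_le_right _ _) (by positivity)
      _ = A := by field_simp
  have h3 : ENNReal.ofReal (I.toReal + 1) ≤ I :=
    le_trans (ENNReal.ofReal_le_ofReal h2) h1
  have h5 : ENNReal.ofReal (I.toReal + 1) = I + 1 := by
    rw [ENNReal.ofReal_add ENNReal.toReal_nonneg zero_le_one,
      ENNReal.ofReal_toReal hIlt.ne, ENNReal.ofReal_one]
  rw [h5] at h3
  exact absurd (lt_of_lt_of_le (ENNReal.lt_add_right hIlt.ne one_ne_zero) h3) (lt_irrefl I)
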